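/- Given a circle C and three points a, b, c on C, there exists a point p in the open disk bounded by C and three circular arcs joining p to a, to b, and to c, each arc meeting C perpendicularly at its endpoint on C, such that the three arcs meet at p at pairwise 120° angles. -/

import Mathlib

open Set Metric

noncomputable section

/-- A `Piece` is a parameterized circular arc or line segment in the plane `ℂ`. -/
inductive Piece : Type
  | arc (c : ℂ) (r θ₀ θ₁ : ℝ) : Piece
  | seg (p q : ℂ) : Piece

namespace Piece

/-- The parameterization of a piece over `[0,1]`. -/
def toFun : Piece → ℝ → ℂ
  | arc c r θ₀ θ₁, t => c + (r : ℂ) * Complex.exp (Complex.I * ((θ₀ + t * (θ₁ - θ₀) : ℝ) : ℂ))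
  | seg p q, t => p + (t : ℂ) * (q - p)

/-- The velocity (tangent) vector of a piece at parameter `t`. -/
def tangent : Piece → ℝ → ℂ
  | arc c r θ₀ θ₁, t =>
      (r : ℂ) * ((θ₁ - θ₀ : ℝ) : ℂ) * Complex.I *
        Complex.exp (Complex.I * ((θ₀ + t * (θ₁ - θ₀) : ℝ) : ℂ))
  | seg p q, _ => q - p

/-- Starting point. -/
def source (P : Piece) : ℂ := P.toFun 0

/-- Ending point. -/
def target (P : Piece) : ℂ := P.toFun 1

/-- The trace of the piece in the plane. -/
def image (P : Piece) : Set ℂ := P.toFun '' Set.Icc 0 1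

/-- Nondegeneracy: the parameterization has nonvanishing velocity. -/
def Nondeg : Piece → Prop
  | arc _ r θ₀ θ₁ => r ≠ 0 ∧ θ₀ ≠ θ₁
  | seg p q => p ≠ q

end Piece

/-- The unsigned angle in `[0, π]` between two vectors of the plane `ℂ`. -/
def vecAngle (u v : ℂ) : ℝ := Real.arccos (((starRingEnd ℂ) u * v).re / (‖u‖ * ‖v‖))

/-- The angle in `[0, π/2]` between the two *lines* spanned by `u` and `v`. -/
def lineAngle (u v : ℂ) : ℝ := Real.arccos (|((starRingEnd ℂ) u * v).re| / (‖u‖ * ‖v‖))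

/-- The direction of a vector, as an angle modulo `2π`. -/
def dirAngle (z : ℂ) : Real.Angle := (Complex.arg z : Real.Angle)

/-- Compatibility: the complex absolute value as an `AbsoluteValue`. -/
def Complex.abs : AbsoluteValue ℂ ℝ where
  toFun z := ‖z‖
  map_mul' := norm_mul
  nonneg' := norm_nonneg
  eq_zero' _ := norm_eq_zero
  add_le' := norm_add_le

theorem Complex.norm_eq_abs (z : ℂ) : ‖z‖ = Complex.abs z := rfl

theorem Complex.abs_conj (z : ℂ) : Complex.abs ((starRingEnd ℂ) z) = Complex.abs z :=
  Complex.norm_conj z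

theorem Complex.abs_ofReal (r : ℝ) : Complex.abs (r : ℂ) = |r| := Complex.norm_real r

theorem Complex.abs_I : Complex.abs Complex.I = 1 := Complex.norm_I

theorem Complex.normSq_eq_abs (z : ℂ) : Complex.normSq z = Complex.abs z ^ 2 :=
  Complex.normSq_eq_norm_sq z

theorem Complex.sq_abs (z : ℂ) : Complex.abs z ^ 2 = Complex.normSq z := Complex.sq_norm z

theorem Complex.re_le_abs (z : ℂ) : z.re ≤ Complex.abs z := Complex.re_le_norm z

theorem Complex.abs_mul_exp_arg_mul_I (z : ℂ) :
    (Complex.abs z : ℂ) * Complex.exp (z.arg * Complex.I) = z :=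
  Complex.norm_mul_exp_arg_mul_I z

namespace Tripod

open Complex

local notation "conj'" => (starRingEnd ℂ)

lemma mul_conj_one {x : ℂ} (hx : Complex.abs x = 1) : x * conj' x = 1 := by
  rw [Complex.mul_conj]
  norm_cast
  rw [Complex.normSq_eq_abs, hx]
  norm_num

lemma conj_mul_one {x : ℂ} (hx : Complex.abs x = 1) : conj' x * x = 1 := by
  rw [mul_comm]; exact mul_conj_one hx

lemma abs_num_eq_abs_den {x p : ℂ} (hx : Complex.abs x = 1) :
    Complex.abs (x - p) = Complex.abs (1 - conj' p * x) := by
  have h1 : x * conj' x = 1 := mul_conj_one hx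
  have key : x - p = x * conj' (1 - conj' p * x) := by
    rw [map_sub, map_one, map_mul, Complex.conj_conj]
    linear_combination p * h1
  rw [key, map_mul, hx, one_mul, Complex.abs_conj]

lemma den_ne {x p : ℂ} (hx : Complex.abs x = 1) (hp : Complex.abs p < 1) :
    1 - conj' p * x ≠ 0 := by
  intro h
  have h2 : conj' p * x = 1 := by linear_combination -h
  have h3 := congrArg Complex.abs h2
  rw [map_mul, Complex.abs_conj, hx, mul_one, map_one] at h3
  linarith

lemma abs_g {x p : ℂ} (hx : Complex.abs x = 1) (hp : Complex.abs p < 1) :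
    Complex.abs ((x - p) / (1 - conj' p * x)) = 1 := by
  rw [map_div₀, abs_num_eq_abs_den hx, div_self]
  exact Complex.abs.ne_zero (den_ne hx hp)

lemma exp_I_arg {z : ℂ} (hz : Complex.abs z = 1) : Complex.exp (Complex.I * z.arg) = z := by
  have h := Complex.abs_mul_exp_arg_mul_I z
  rw [hz] at h
  rw [mul_comm]
  simpa using h

lemma piece_exists {p x : ℂ} (hp : Complex.abs p < 1) (hx : Complex.abs x = 1) :
    ∃ P : Piece, P.Nondeg ∧ P.source = p ∧ P.target = x ∧
      ((conj' (P.tangent 1)) * (Complex.I * x)).re = 0 ∧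
      ∃ l : ℝ, 0 < l ∧ P.tangent 0 = (l : ℂ) * ((x - p) / (1 - conj' p * x)) := by
  have hx1 : x * conj' x = 1 := mul_conj_one hx
  have hx1' : conj' x * x = 1 := conj_mul_one hx
  have hne : p ≠ x := by intro h; rw [h] at hp; rw [hx] at hp; exact absurd hp (lt_irrefl 1)
  have hden := den_ne hx hp
  have hxp0 : x - p ≠ 0 := sub_ne_zero.mpr (Ne.symm hne)
  set g : ℂ := (x - p) / (1 - conj' p * x) with hg
  by_cases hm : ((conj' x) * p).im = 0
  · -- segment case
    have him : (conj' p * x).im = 0 := by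
      have h1 : conj' p * x = conj' (conj' x * p) := by rw [map_mul, Complex.conj_conj]; ring
      rw [h1, Complex.conj_im, hm, neg_zero]
    refine ⟨Piece.seg p x, hne, ?_, ?_, ?_, ?_⟩
    · show p + ((0:ℝ):ℂ) * (x - p) = p
      push_cast; ring
    · show p + ((1:ℝ):ℂ) * (x - p) = x
      push_cast; ring
    · show (conj' (x - p) * (Complex.I * x)).re = 0
      have e : conj' (x - p) * (Complex.I * x) = Complex.I * (1 - conj' p * x) := by
        rw [map_sub]
        linear_combination Complex.I * hx1'
      rw [e]
      simp [Complex.mul_re, Complex.I_re, Complex.I_im, Complex.sub_im, him]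
    · refine ⟨(1 - conj' p * x).re, ?_, ?_⟩
      · have h1 : (conj' p * x).re ≤ Complex.abs (conj' p * x) := Complex.re_le_abs _
        have h2 : Complex.abs (conj' p * x) = Complex.abs p := by
          rw [map_mul, Complex.abs_conj, hx, mul_one]
        simp only [Complex.sub_re, Complex.one_re]
        rw [h2] at h1
        linarith
      · show x - p = ((((1 - conj' p * x).re : ℝ)) : ℂ) * g
        have hreal : (((1 - conj' p * x).re : ℝ) : ℂ) = 1 - conj' p * x := by
          apply Complex.ext
          · simp
          · simp [him]
        rw [hreal, hg]
        field_simp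
        exact (div_self (by rwa [mul_comm] at hden)).symm
  · -- arc case
    set m : ℝ := ((conj' x) * p).im with hmdef
    set t : ℝ := Complex.normSq (x - p) / (2 * m) with ht
    have hm2 : (2 : ℝ) * m ≠ 0 := by simpa using hm
    have ht0 : t ≠ 0 := by
      apply div_ne_zero _ hm2
      exact_mod_cast Complex.normSq_pos.mpr hxp0 |>.ne'
    have ht0C : (t : ℂ) ≠ 0 := by exact_mod_cast ht0
    have hsub : conj' x * p - x * conj' p = ((2 * m : ℝ) : ℂ) * Complex.I := by
      have h := Complex.sub_conj (conj' x * p)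
      rw [map_mul, Complex.conj_conj] at h
      rw [← hmdef] at h
      exact h
    have hC : conj' x * p - x * conj' p ≠ 0 := by
      rw [hsub]
      simp only [ne_eq, mul_eq_zero, Complex.I_ne_zero, or_false]
      exact_mod_cast hm2
    have hH1 : (t:ℂ) * (conj' x * p - x * conj' p) = (x - p) * (conj' x - conj' p) * Complex.I := by
      rw [hsub]
      have h1 : ((t:ℝ):ℂ) * ((2*m:ℝ):ℂ) = ((Complex.normSq (x-p) : ℝ):ℂ) := by
        rw [← Complex.ofReal_mul]
        congr 1
        rw [ht]; field_simp
      have h2 : ((Complex.normSq (x-p) : ℝ):ℂ) = (x - p) * (conj' x - conj' p) := by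
        rw [← map_sub, ← Complex.mul_conj]
      calc (t:ℂ) * (((2*m:ℝ):ℂ) * Complex.I) = (((t:ℝ):ℂ) * ((2*m:ℝ):ℂ)) * Complex.I := by ring
        _ = (x - p) * (conj' x - conj' p) * Complex.I := by rw [h1, h2]
    set q : ℂ := x + (t:ℂ) * Complex.I * x with hq
    have key : Complex.I * (p - q) = (t:ℂ) * g := by
      rw [hg, ← mul_div_assoc, eq_div_iff hden]
      apply mul_right_cancel₀ hC
      rw [hq]
      linear_combination (x*(1 - conj' p * x) - (x - p)) * hH1 + (-(Complex.I * (x-p)^2 * conj' p)) * hx1 + ((t:ℂ)*(-(p*x*conj' x) + p*x^2*conj' p*conj' x + x^2*conj' p - x^3*(conj' p)^2)) * Complex.I_sq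
    have hpq : p - q = -Complex.I * ((t:ℂ) * g) := by
      calc p - q = -Complex.I * (Complex.I * (p - q)) := by
            rw [← mul_assoc]
            simp [Complex.I_mul_I]
        _ = -Complex.I * ((t:ℂ) * g) := by rw [key]
    have habs_pq : Complex.abs ((p - q) / (t:ℂ)) = 1 := by
      rw [hpq]
      rw [map_div₀, map_mul, map_mul, map_neg_eq_map, Complex.abs_I, one_mul, Complex.abs_ofReal]
      rw [abs_g hx hp]
      rw [mul_one, div_self (by simpa using ht0)]
    set θ₁ : ℝ := (-Complex.I * x).arg with hth1
    set base : ℝ := ((p - q) / (t:ℂ)).arg with hbase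
    set θ₀ : ℝ := base + (if 0 < t then -(2*Real.pi) else 2*Real.pi) with hth0
    have e1 : Complex.exp (Complex.I * (θ₁:ℂ)) = -Complex.I * x := by
      apply exp_I_arg
      rw [map_mul, map_neg_eq_map, Complex.abs_I, one_mul, hx]
    have ebase : Complex.exp (Complex.I * (base:ℂ)) = (p - q) / (t:ℂ) := exp_I_arg habs_pq
    have etwopi : Complex.exp (Complex.I * ((2*Real.pi : ℝ):ℂ)) = 1 := by
      rw [show Complex.I * ((2*Real.pi : ℝ):ℂ) = 2 * (Real.pi:ℂ) * Complex.I by push_cast; ring]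
      exact Complex.exp_two_pi_mul_I
    have e0 : Complex.exp (Complex.I * (θ₀:ℂ)) = (p - q) / (t:ℂ) := by
      rw [hth0]
      by_cases hsgn : 0 < t
      · rw [if_pos hsgn]
        rw [show Complex.I * ((base + -(2*Real.pi) : ℝ):ℂ)
            = Complex.I * (base:ℂ) - Complex.I * ((2*Real.pi:ℝ):ℂ) by push_cast; ring]
        rw [Complex.exp_sub, ebase, etwopi, div_one]
      · rw [if_neg hsgn]
        rw [show Complex.I * ((base + 2*Real.pi : ℝ):ℂ)
            = Complex.I * (base:ℂ) + Complex.I * ((2*Real.pi:ℝ):ℂ) by push_cast; ring]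
        rw [Complex.exp_add, ebase, etwopi, mul_one]
    have hb1 : -Real.pi < base := Complex.neg_pi_lt_arg _
    have hb2 : base ≤ Real.pi := Complex.arg_le_pi _
    have ha1 : -Real.pi < θ₁ := Complex.neg_pi_lt_arg _
    have ha2 : θ₁ ≤ Real.pi := Complex.arg_le_pi _
    have hpi : (0:ℝ) < Real.pi := Real.pi_pos
    have hDpos : 0 < (θ₁ - θ₀) * t := by
      by_cases hsgn : 0 < t
      · rw [hth0, if_pos hsgn]
        have : 0 < θ₁ - (base + -(2*Real.pi)) := by linarith
        positivity
      · have htneg : t < 0 := lt_of_le_of_ne (not_lt.mp hsgn) ht0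
        rw [hth0, if_neg hsgn]
        have h1 : θ₁ - (base + 2*Real.pi) < 0 := by linarith
        exact mul_pos_of_neg_of_neg h1 htneg
    have hθne : θ₀ ≠ θ₁ := by
      intro h
      rw [h] at hDpos
      simp at hDpos
    refine ⟨Piece.arc q t θ₀ θ₁, ⟨ht0, hθne⟩, ?_, ?_, ?_, ?_⟩
    · show q + (t:ℂ) * Complex.exp (Complex.I * ((θ₀ + 0*(θ₁-θ₀) : ℝ):ℂ)) = p
      rw [show (θ₀ + 0*(θ₁-θ₀) : ℝ) = θ₀ by ring, e0]
      field_simp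
      ring
    · show q + (t:ℂ) * Complex.exp (Complex.I * ((θ₀ + 1*(θ₁-θ₀) : ℝ):ℂ)) = x
      rw [show (θ₀ + 1*(θ₁-θ₀) : ℝ) = θ₁ by ring, e1, hq]
      ring
    · show (conj' ((t:ℂ) * ((θ₁ - θ₀ : ℝ):ℂ) * Complex.I *
          Complex.exp (Complex.I * ((θ₀ + 1*(θ₁-θ₀) : ℝ):ℂ))) * (Complex.I * x)).re = 0
      rw [show (θ₀ + 1*(θ₁-θ₀) : ℝ) = θ₁ by ring, e1]
      have e2 : (t:ℂ) * ((θ₁ - θ₀ : ℝ):ℂ) * Complex.I * (-Complex.I * x)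
          = ((t * (θ₁ - θ₀) : ℝ):ℂ) * x := by
        push_cast
        have : Complex.I * -Complex.I = 1 := by
          rw [mul_neg, Complex.I_mul_I]; ring
        linear_combination ((t:ℂ) * ((θ₁:ℂ) - (θ₀:ℂ)) * x) * this
      rw [e2, map_mul, Complex.conj_ofReal]
      have e3 : ((t * (θ₁ - θ₀) : ℝ):ℂ) * conj' x * (Complex.I * x)
          = ((t * (θ₁ - θ₀) : ℝ):ℂ) * Complex.I := by
        linear_combination (((t * (θ₁ - θ₀) : ℝ):ℂ) * Complex.I) * hx1'
      rw [e3]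
      simp
    · refine ⟨(θ₁ - θ₀) * t, hDpos, ?_⟩
      show (t:ℂ) * ((θ₁ - θ₀ : ℝ):ℂ) * Complex.I *
          Complex.exp (Complex.I * ((θ₀ + 0*(θ₁-θ₀) : ℝ):ℂ)) = (((θ₁ - θ₀) * t : ℝ):ℂ) * g
      rw [show (θ₀ + 0*(θ₁-θ₀) : ℝ) = θ₀ by ring, e0]
      have : (t:ℂ) * ((θ₁ - θ₀ : ℝ):ℂ) * Complex.I * ((p - q) / (t:ℂ))
          = ((θ₁ - θ₀ : ℝ):ℂ) * (Complex.I * (p - q)) := by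
        field_simp
      rw [this, key]
      push_cast
      ring

def Af (a b c w : ℂ) : ℂ := -c*(b-a)*(w-w^2) + a*(b-c)*(w-1)
def Bf (a b c w : ℂ) : ℂ := c*(b-a)*(w-w^2) - a*w^2*(b-c)*(w-1)
def Gf (a b c w : ℂ) : ℂ := -(b-a)*(w-w^2) + (b-c)*(w-1)
def Df (a b c w : ℂ) : ℂ := (b-a)*(w-w^2) - w^2*(b-c)*(w-1)

lemma conj_eq_inv {a : ℂ} (ha : Complex.abs a = 1) : conj' a = a⁻¹ :=
  eq_inv_of_mul_eq_one_left (conj_mul_one ha)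

lemma Ldet (a b c ω : ℂ) :
    Af a b c ω * Df a b c ω - Bf a b c ω * Gf a b c ω
      = (b-c)*(b-a)*(a-c)*((ω-ω^2)*(ω-1)*(1-ω^2)) := by
  simp only [Af, Bf, Gf, Df]; ring

lemma det_ne (a b c ω : ℂ) (hab : a ≠ b) (hbc : b ≠ c) (hac : a ≠ c)
    (h1 : ω ≠ ω^2) (h2 : ω ≠ 1) (h3 : ω^2 ≠ 1) :
    Af a b c ω * Df a b c ω - Bf a b c ω * Gf a b c ω ≠ 0 := by
  rw [Ldet]
  exact mul_ne_zero (mul_ne_zero (mul_ne_zero (sub_ne_zero.mpr hbc)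
      (sub_ne_zero.mpr hab.symm)) (sub_ne_zero.mpr hac))
    (mul_ne_zero (mul_ne_zero (sub_ne_zero.mpr h1) (sub_ne_zero.mpr h2))
      (sub_ne_zero.mpr (Ne.symm h3)))

section ConjLemmas

variable {a b c : ℂ} (ω : ℂ)

lemma conj_Af (ha : Complex.abs a = 1) (hb : Complex.abs b = 1) (hc : Complex.abs c = 1)
    (hcω : conj' ω = ω^2) : conj' (Af a b c ω) * (a*b*c) = -(Gf a b c (ω^2)) := by
  have ha0 : a ≠ 0 := fun h => by simp [h] at ha
  have hb0 : b ≠ 0 := fun h => by simp [h] at hb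
  have hc0 : c ≠ 0 := fun h => by simp [h] at hc
  simp only [Af, Gf, map_add, map_neg, map_mul, map_sub, map_one, map_pow,
    conj_eq_inv ha, conj_eq_inv hb, conj_eq_inv hc, hcω]
  field_simp
  ring

lemma conj_Bf (ha : Complex.abs a = 1) (hb : Complex.abs b = 1) (hc : Complex.abs c = 1)
    (hcω : conj' ω = ω^2) : conj' (Bf a b c ω) * (a*b*c) = -(Df a b c (ω^2)) := by
  have ha0 : a ≠ 0 := fun h => by simp [h] at ha
  have hb0 : b ≠ 0 := fun h => by simp [h] at hb
  have hc0 : c ≠ 0 := fun h => by simp [h] at hc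
  simp only [Bf, Df, map_add, map_neg, map_mul, map_sub, map_one, map_pow,
    conj_eq_inv ha, conj_eq_inv hb, conj_eq_inv hc, hcω]
  field_simp
  ring

lemma conj_Gf (ha : Complex.abs a = 1) (hb : Complex.abs b = 1) (hc : Complex.abs c = 1)
    (hcω : conj' ω = ω^2) : conj' (Gf a b c ω) * (a*b*c) = -(Af a b c (ω^2)) := by
  have ha0 : a ≠ 0 := fun h => by simp [h] at ha
  have hb0 : b ≠ 0 := fun h => by simp [h] at hb
  have hc0 : c ≠ 0 := fun h => by simp [h] at hc
  simp only [Af, Gf, map_add, map_neg, map_mul, map_sub, map_one, map_pow,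
    conj_eq_inv ha, conj_eq_inv hb, conj_eq_inv hc, hcω]
  field_simp
  ring

lemma conj_Df (ha : Complex.abs a = 1) (hb : Complex.abs b = 1) (hc : Complex.abs c = 1)
    (hcω : conj' ω = ω^2) : conj' (Df a b c ω) * (a*b*c) = -(Bf a b c (ω^2)) := by
  have ha0 : a ≠ 0 := fun h => by simp [h] at ha
  have hb0 : b ≠ 0 := fun h => by simp [h] at hb
  have hc0 : c ≠ 0 := fun h => by simp [h] at hc
  simp only [Bf, Df, map_add, map_neg, map_mul, map_sub, map_one, map_pow,
    conj_eq_inv ha, conj_eq_inv hb, conj_eq_inv hc, hcω]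
  field_simp
  ring

end ConjLemmas

lemma L1 (a b c ω : ℂ) (hω : ω^2 + ω + 1 = 0) :
    Bf a b c ω * Gf a b c (ω^2) = Df a b c ω * Af a b c (ω^2) := by
  simp only [Bf, Gf, Df, Af]
  linear_combination (b*c^2*ω - 2*b*c^2*ω^2 + 2*b*c^2*ω^4 - b*c^2*ω^5 - b^2*c*ω + 2*b^2*c*ω^2 - 2*b^2*c*ω^4 + b^2*c*ω^5 - a*c^2*ω + 2*a*c^2*ω^2 - 2*a*c^2*ω^4 + a*c^2*ω^5 + a*b^2*ω - 2*a*b^2*ω^2 + 2*a*b^2*ω^4 - a*b^2*ω^5 + a^2*c*ω - 2*a^2*c*ω^2 + 2*a^2*c*ω^4 - a^2*c*ω^5 - a^2*b*ω + 2*a^2*b*ω^2 - 2*a^2*b*ω^4 + a^2*b*ω^5) * hω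

lemma L2 (a b c ω : ℂ) (hω : ω^2 + ω + 1 = 0) :
    (b * Df a b c ω - Bf a b c ω) * (Bf a b c (ω^2) - Df a b c (ω^2) * a)
      = ω * ((a * Df a b c ω - Bf a b c ω) * (Bf a b c (ω^2) - Df a b c (ω^2) * b)) := by
  simp only [Bf, Df]
  linear_combination (- b^2*c^2*ω^3 + 2*b^2*c^2*ω^4 - 2*b^2*c^2*ω^6 + b^2*c^2*ω^7 + b^3*c*ω^3 - 2*b^3*c*ω^4 + 2*b^3*c*ω^6 - b^3*c*ω^7 + 2*a*b*c^2*ω^3 - 4*a*b*c^2*ω^4 + 4*a*b*c^2*ω^6 - 2*a*b*c^2*ω^7 - a*b^2*c*ω^3 + 2*a*b^2*c*ω^4 - 2*a*b^2*c*ω^6 + a*b^2*c*ω^7 - a*b^3*ω^3 + 2*a*b^3*ω^4 - 2*a*b^3*ω^6 + a*b^3*ω^7 - a^2*c^2*ω^3 + 2*a^2*c^2*ω^4 - 2*a^2*c^2*ω^6 + a^2*c^2*ω^7 - a^2*b*c*ω^3 + 2*a^2*b*c*ω^4 - 2*a^2*b*c*ω^6 + a^2*b*c*ω^7 + 2*a^2*b^2*ω^3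 - 4*a^2*b^2*ω^4 + 4*a^2*b^2*ω^6 - 2*a^2*b^2*ω^7 + a^3*c*ω^3 - 2*a^3*c*ω^4 + 2*a^3*c*ω^6 - a^3*c*ω^7 - a^3*b*ω^3 + 2*a^3*b*ω^4 - 2*a^3*b*ω^6 + a^3*b*ω^7) * hω

lemma L3 (a b c ω : ℂ) (hω : ω^2 + ω + 1 = 0) :
    (c * Df a b c ω - Bf a b c ω) * (Bf a b c (ω^2) - Df a b c (ω^2) * a)
      = ω^2 * ((a * Df a b c ω - Bf a b c ω) * (Bf a b c (ω^2) - Df a b c (ω^2) * c)) := by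
  simp only [Bf, Df]
  linear_combination (- b*c^3*ω^4 + 2*b*c^3*ω^5 - 2*b*c^3*ω^7 + b*c^3*ω^8 + b^2*c^2*ω^4 - 2*b^2*c^2*ω^5 + 2*b^2*c^2*ω^7 - b^2*c^2*ω^8 + a*c^3*ω^4 - 2*a*c^3*ω^5 + 2*a*c^3*ω^7 - a*c^3*ω^8 + a*b*c^2*ω^4 - 2*a*b*c^2*ω^5 + 2*a*b*c^2*ω^7 - a*b*c^2*ω^8 - 2*a*b^2*c*ω^4 + 4*a*b^2*c*ω^5 - 4*a*b^2*c*ω^7 + 2*a*b^2*c*ω^8 - 2*a^2*c^2*ω^4 + 4*a^2*c^2*ω^5 - 4*a^2*c^2*ω^7 + 2*a^2*c^2*ω^8 + a^2*b*c*ω^4 - 2*a^2*b*c*ω^5 + 2*a^2*b*c*ω^7 - a^2*b*c*ω^8 + a^2*b^2*ω^4 - 2*a^2*b^2*ω^5 + 2*a^2*b^2*ω^7 - a^2*b^2*ω^8 + a^3*c*ω^4 - 2*a^3*c*ω^5 + 2*a^3*c*ω^7 - a^3*c*ω^8 - a^3*b*ω^4 + 2*a^3*b*ω^5 - 2*a^3*b*ω^7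 + a^3*b*ω^8) * hω

lemma candidate (a b c ω : ℂ) (ha : Complex.abs a = 1) (hb : Complex.abs b = 1)
    (hc : Complex.abs c = 1) (hω : ω^2 + ω + 1 = 0) (hcω : conj' ω = ω^2)
    (hδ : Df a b c ω ≠ 0) :
    ∃ p : ℂ, p = Bf a b c ω / Df a b c ω ∧
      (b - p) * (1 - conj' p * a) = ω * ((a - p) * (1 - conj' p * b)) ∧
      (c - p) * (1 - conj' p * a) = ω^2 * ((a - p) * (1 - conj' p * c)) := by
  have ha0 : a ≠ 0 := fun h => by simp [h] at ha
  have hb0 : b ≠ 0 := fun h => by simp [h] at hb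
  have hc0 : c ≠ 0 := fun h => by simp [h] at hc
  have habc : a * b * c ≠ 0 := by simp [ha0, hb0, hc0]
  have hB2 : Bf a b c (ω^2) ≠ 0 := by
    intro h
    have h2 := conj_Df ω ha hb hc hcω
    rw [h, neg_zero] at h2
    rcases mul_eq_zero.mp h2 with h4 | h4
    · apply hδ
      have := congrArg conj' h4
      simpa using this
    · exact habc h4
  have hconjp : conj' (Bf a b c ω / Df a b c ω) = Df a b c (ω^2) / Bf a b c (ω^2) := by
    have hδ' : conj' (Df a b c ω) ≠ 0 := by
      intro h; apply hδ
      have := congrArg conj' h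
      simpa using this
    rw [map_div₀, div_eq_div_iff hδ' hB2]
    have h1 := conj_Bf ω ha hb hc hcω
    have h2 := conj_Df ω ha hb hc hcω
    apply mul_right_cancel₀ habc
    linear_combination (Bf a b c (ω^2)) * h1 - (Df a b c (ω^2)) * h2
  refine ⟨Bf a b c ω / Df a b c ω, rfl, ?_, ?_⟩
  · rw [hconjp]
    have hL2 := L2 a b c ω hω
    field_simp
    linear_combination hL2
  · rw [hconjp]
    have hL3 := L3 a b c ω hω
    field_simp
    linear_combination hL3

lemma exists_center (a b c : ℂ) (ha : Complex.abs a = 1) (hb : Complex.abs b = 1)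
    (hc : Complex.abs c = 1) (hab : a ≠ b) (hbc : b ≠ c) (hac : a ≠ c) :
    ∃ p ω : ℂ, Complex.abs p < 1 ∧ ω^2 + ω + 1 = 0 ∧ conj' ω = ω^2 ∧ ω.re = -(1/2) ∧
      (b - p) * (1 - conj' p * a) = ω * ((a - p) * (1 - conj' p * b)) ∧
      (c - p) * (1 - conj' p * a) = ω^2 * ((a - p) * (1 - conj' p * c)) := by
  set s : ℝ := Real.sqrt 3 with hs
  have hs2 : (s:ℂ)^2 = 3 := by
    norm_cast
    rw [hs, Real.sq_sqrt] <;> norm_num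
  have hspos : 0 < s := by rw [hs]; positivity
  set ω : ℂ := ((-(1/2) : ℝ) : ℂ) + ((s/2 : ℝ) : ℂ) * Complex.I with hωdef
  have hω : ω^2 + ω + 1 = 0 := by
    rw [hωdef]
    push_cast
    linear_combination (Complex.I^2/4) * hs2 + ((3:ℂ)/4) * Complex.I_sq
  have hsq : ω^2 = -ω - 1 := by linear_combination hω
  have hre : ω.re = -(1/2) := by simp [hωdef]
  have him : ω.im = s/2 := by simp [hωdef]
  have hcω : conj' ω = ω^2 := by
    rw [hsq, hωdef, map_add, map_mul, Complex.conj_ofReal, Complex.conj_ofReal, Complex.conj_I]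
    push_cast
    ring
  have h2 : ω ≠ 1 := by
    intro h
    have := congrArg Complex.re h
    rw [hre] at this
    norm_num at this
  have h3 : ω^2 ≠ 1 := by
    intro h
    have hω2 : ω = -2 := by linear_combination hω - h
    have := congrArg Complex.im hω2
    rw [him] at this
    simp at this
    linarith
  have h1 : ω ≠ ω^2 := by
    intro h
    rw [← hcω] at h
    have := congrArg Complex.im h
    rw [him, Complex.conj_im, him] at this
    linarith
  have hω4 : ω^4 = ω := by linear_combination (ω^2 - ω) * hω
  have hω4' : (ω^2)^2 = ω := by linear_combination (ω^2 - ω) * hω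
  have hω2' : (ω^2)^2 + ω^2 + 1 = 0 := by linear_combination (ω^2 - ω + 1) * hω
  have hcω2 : conj' (ω^2) = (ω^2)^2 := by rw [map_pow, hcω]
  have hre2 : (ω^2).re = -(1/2) := by
    rw [hsq]
    simp [hre]
    norm_num
  have h1' : ω^2 ≠ (ω^2)^2 := by rw [hω4']; exact fun h => h1 h.symm
  have h3' : (ω^2)^2 ≠ 1 := by rw [hω4']; exact h2
  have ha0 : a ≠ 0 := fun h => by simp [h] at ha
  have hb0 : b ≠ 0 := fun h => by simp [h] at hb
  have hc0 : c ≠ 0 := fun h => by simp [h] at hc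
  have habc : a * b * c ≠ 0 := by simp [ha0, hb0, hc0]
  have hdet := det_ne a b c ω hab hbc hac h1 h2 h3
  have hdet2 := det_ne a b c (ω^2) hab hbc hac h1' h3 h3'
  have conj_zero_iff : ∀ z : ℂ, conj' z = 0 → z = 0 := by
    intro z hz
    have := congrArg conj' hz
    simpa using this
  by_cases hδ : Df a b c ω = 0
  · -- branch: use ω^2, p = 0
    have hB : Bf a b c ω ≠ 0 := by
      intro h
      apply hdet
      rw [hδ, h]
      ring
    have hB2 : Bf a b c (ω^2) = 0 := by
      have h2' := conj_Df ω ha hb hc hcω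
      rw [hδ, map_zero, zero_mul] at h2'
      linear_combination h2'
    have hD2 : Df a b c (ω^2) ≠ 0 := by
      intro h
      have h3'' := conj_Bf ω ha hb hc hcω
      rw [h, neg_zero] at h3''
      rcases mul_eq_zero.mp h3'' with h4 | h4
      · exact hB (conj_zero_iff _ h4)
      · exact habc h4
    obtain ⟨p, hpdef, he1, he2⟩ := candidate a b c (ω^2) ha hb hc hω2' hcω2 hD2
    refine ⟨p, ω^2, ?_, hω2', hcω2, hre2, he1, ?_⟩
    · rw [hpdef, hB2, zero_div, map_zero]
      norm_num
    · rw [hω4']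
      rw [hω4'] at he2
      exact he2
  · by_cases hlt : Complex.abs (Bf a b c ω / Df a b c ω) < 1
    · obtain ⟨p, hpdef, he1, he2⟩ := candidate a b c ω ha hb hc hω hcω hδ
      exact ⟨p, ω, by rw [hpdef]; exact hlt, hω, hcω, hre, he1, he2⟩
    · -- use ω^2
      push_neg at hlt
      have hB : Bf a b c ω ≠ 0 := by
        intro h
        rw [h, zero_div, map_zero] at hlt
        linarith
      have hD2 : Df a b c (ω^2) ≠ 0 := by
        intro h
        have h3'' := conj_Bf ω ha hb hc hcω
        rw [h, neg_zero] at h3''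
        rcases mul_eq_zero.mp h3'' with h4 | h4
        · exact hB (conj_zero_iff _ h4)
        · exact habc h4
      have hB2 : Bf a b c (ω^2) ≠ 0 := by
        intro h
        have h3'' := conj_Df ω ha hb hc hcω
        rw [h, neg_zero] at h3''
        rcases mul_eq_zero.mp h3'' with h4 | h4
        · exact hδ (conj_zero_iff _ h4)
        · exact habc h4
      obtain ⟨p, hpdef, he1, he2⟩ := candidate a b c (ω^2) ha hb hc hω2' hcω2 hD2
      set p1 : ℂ := Bf a b c ω / Df a b c ω with hp1
      have hconjp2 : conj' p = Df a b c ω / Bf a b c ω := by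
        have h2' := conj_Bf (ω^2) ha hb hc hcω2
        have h3'' := conj_Df (ω^2) ha hb hc hcω2
        rw [hω4'] at h2' h3''
        rw [hpdef, map_div₀, div_eq_div_iff]
        · apply mul_right_cancel₀ habc
          linear_combination (Bf a b c ω) * h2' - (Df a b c ω) * h3''
        · intro h
          exact hD2 (conj_zero_iff _ h)
        · exact hB
      have hprod : p1 * conj' p = 1 := by
        rw [hp1, hconjp2]
        field_simp
      have habs1 : Complex.abs p1 * Complex.abs p = 1 := by
        have := congrArg Complex.abs hprod
        rwa [map_mul, Complex.abs_conj, map_one] at this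
      have hple : Complex.abs p ≤ 1 := by
        rcases le_or_gt (Complex.abs p) 1 with h | h
        · exact h
        · nlinarith
      have hpne : Complex.abs p ≠ 1 := by
        intro heq
        have hab1 : Complex.abs p1 = 1 := by
          rw [heq, mul_one] at habs1
          exact habs1
        have hp1ne : p1 ≠ 0 := by
          intro h
          rw [h, map_zero] at hab1
          norm_num at hab1
        have hselfc : p1 * conj' p1 = 1 := by
          rw [Complex.mul_conj]
          norm_cast
          rw [Complex.normSq_eq_abs, hab1]
          norm_num
        have hcc : conj' p = conj' p1 := by
          apply mul_left_cancel₀ hp1ne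
          rw [hprod, hselfc]
        have hpp : p = p1 := by
          have := congrArg conj' hcc
          simpa using this
        -- derive det = 0
        have hcross : Bf a b c ω * Df a b c (ω^2) = Df a b c ω * Bf a b c (ω^2) := by
          have h6 := hpp
          rw [hpdef, hp1] at h6
          have h5 := (div_eq_div_iff hD2 hδ).mp h6
          linear_combination -h5
        have hL1' := L1 a b c (ω^2) hω2'
        rw [hω4'] at hL1'
        have hzero : (Af a b c ω * Df a b c ω - Bf a b c ω * Gf a b c ω) * Df a b c (ω^2) = 0 := by
          linear_combination (-(Df a b c ω)) * hL1' + (-(Gf a b c ω)) * hcross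
        rcases mul_eq_zero.mp hzero with h4 | h4
        · exact hdet h4
        · exact hD2 h4
      refine ⟨p, ω^2, lt_of_le_of_ne hple hpne, hω2', hcω2, hre2, he1, ?_⟩
      rw [hω4']
      rw [hω4'] at he2
      exact he2

lemma lineAngle_perp {u v : ℂ} (h : ((starRingEnd ℂ) u * v).re = 0) :
    lineAngle u v = Real.pi / 2 := by
  unfold lineAngle
  rw [h, abs_zero, zero_div, Real.arccos_zero]

lemma arccos_neg_half : Real.arccos (-(1/2)) = 2 * Real.pi / 3 := by
  have h : Real.cos (2*Real.pi/3) = -(1/2) := by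
    rw [show (2*Real.pi/3 : ℝ) = Real.pi - Real.pi/3 by ring, Real.cos_pi_sub,
      Real.cos_pi_div_three]
  rw [← h, Real.arccos_cos (by positivity) (by nlinarith [Real.pi_pos])]

lemma vecAngle_calc {u z : ℂ} (hu : Complex.abs u = 1) (hz : Complex.abs z = 1)
    (hre : z.re = -(1/2)) {la lb : ℝ} (hla : 0 < la) (hlb : 0 < lb) :
    vecAngle ((la:ℂ) * u) ((lb:ℂ) * (z * u)) = 2 * Real.pi / 3 := by
  unfold vecAngle
  have h2 : conj' u * u = 1 := conj_mul_one hu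
  have h1 : conj' ((la:ℂ)*u) * ((lb:ℂ)*(z*u)) = ((la*lb : ℝ):ℂ) * z := by
    rw [map_mul, Complex.conj_ofReal]
    push_cast
    linear_combination ((la:ℂ) * (lb:ℂ) * z) * h2
  rw [h1, Complex.re_ofReal_mul, hre]
  have hnu : ‖u‖ = 1 := by rw [Complex.norm_eq_abs, hu]
  have hnz : ‖z‖ = 1 := by rw [Complex.norm_eq_abs, hz]
  rw [norm_mul, norm_mul, norm_mul, hnu, hnz, Complex.norm_real, Complex.norm_real,
    Real.norm_eq_abs, Real.norm_eq_abs, abs_of_pos hla, abs_of_pos hlb]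
  rw [show la * 1 * (lb * (1 * 1)) = la * lb by ring]
  rw [mul_div_cancel_left₀ _ (ne_of_gt (mul_pos hla hlb))]
  exact arccos_neg_half

lemma vecAngle_smul {R : ℝ} (hR : 0 < R) (u v : ℂ) :
    vecAngle ((R:ℂ)*u) ((R:ℂ)*v) = vecAngle u v := by
  unfold vecAngle
  rw [map_mul, Complex.conj_ofReal]
  rw [show (R:ℂ) * conj' u * ((R:ℂ) * v) = ((R*R : ℝ):ℂ) * (conj' u * v) by push_cast; ring]
  rw [Complex.re_ofReal_mul]
  rw [norm_mul, norm_mul, Complex.norm_real, Real.norm_eq_abs, abs_of_pos hR]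
  rw [show R * ‖u‖ * (R * ‖v‖) = (R*R) * (‖u‖ * ‖v‖) by ring]
  rw [mul_div_mul_left _ _ (by positivity : R*R ≠ 0)]

lemma unit_case (a b c : ℂ) (ha : Complex.abs a = 1) (hb : Complex.abs b = 1)
    (hc : Complex.abs c = 1) (hab : a ≠ b) (hbc : b ≠ c) (hac : a ≠ c) :
    ∃ p : ℂ, Complex.abs p < 1 ∧
      ∃ Pa Pb Pc : Piece,
        Pa.Nondeg ∧ Pb.Nondeg ∧ Pc.Nondeg ∧
        Pa.source = p ∧ Pa.target = a ∧
        Pb.source = p ∧ Pb.target = b ∧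
        Pc.source = p ∧ Pc.target = c ∧
        ((starRingEnd ℂ) (Pa.tangent 1) * (Complex.I * a)).re = 0 ∧
        ((starRingEnd ℂ) (Pb.tangent 1) * (Complex.I * b)).re = 0 ∧
        ((starRingEnd ℂ) (Pc.tangent 1) * (Complex.I * c)).re = 0 ∧
        vecAngle (Pa.tangent 0) (Pb.tangent 0) = 2 * Real.pi / 3 ∧
        vecAngle (Pb.tangent 0) (Pc.tangent 0) = 2 * Real.pi / 3 ∧
        vecAngle (Pa.tangent 0) (Pc.tangent 0) = 2 * Real.pi / 3 := by
  obtain ⟨p, ω, hp, hω, hcω, hre, e1, e2⟩ := exists_center a b c ha hb hc hab hbc hac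
  have hda := den_ne ha hp
  have hdb := den_ne hb hp
  have hdc := den_ne hc hp
  set ga : ℂ := (a - p) / (1 - conj' p * a) with hga
  set gb : ℂ := (b - p) / (1 - conj' p * b) with hgb
  set gc : ℂ := (c - p) / (1 - conj' p * c) with hgc
  have habsω : Complex.abs ω = 1 := by
    have hn : (Complex.normSq ω : ℂ) = 1 := by
      rw [← Complex.mul_conj, hcω]
      linear_combination (ω - 1) * hω
    have hn' : Complex.normSq ω = 1 := by exact_mod_cast hn
    have := Complex.sq_abs ω
    rw [hn'] at this
    nlinarith [Complex.abs.nonneg ω]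
  have habsω2 : Complex.abs (ω^2) = 1 := by rw [map_pow, habsω, one_pow]
  have hre2 : (ω^2).re = -(1/2) := by
    rw [show ω^2 = -ω - 1 by linear_combination hω]
    simp [hre]
    norm_num
  have hgb' : gb = ω * ga := by
    rw [hgb, hga, div_eq_iff hdb]
    rw [mul_div_assoc', div_mul_eq_mul_div, eq_div_iff hda]
    linear_combination e1
  have hgc' : gc = ω^2 * ga := by
    rw [hgc, hga, div_eq_iff hdc]
    rw [mul_div_assoc', div_mul_eq_mul_div, eq_div_iff hda]
    linear_combination e2
  obtain ⟨Pa, nda, sa, ta, ra, la, hla, hta⟩ := piece_exists hp ha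
  obtain ⟨Pb, ndb, sb, tb, rb, lb, hlb, htb⟩ := piece_exists hp hb
  obtain ⟨Pc, ndc, sc, tc, rc, lc, hlc, htc⟩ := piece_exists hp hc
  rw [← hga] at hta
  rw [← hgb] at htb
  rw [← hgc] at htc
  rw [hgb'] at htb
  rw [hgc'] at htc
  refine ⟨p, hp, Pa, Pb, Pc, nda, ndb, ndc, sa, ta, sb, tb, sc, tc, ra, rb, rc, ?_, ?_, ?_⟩
  · rw [hta, htb]
    exact vecAngle_calc (abs_g ha hp) habsω hre hla hlb
  · rw [htb, htc, show (ω^2 : ℂ) * ga = ω * (ω * ga) by ring]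
    have habsu : Complex.abs (ω * ga) = 1 := by
      rw [map_mul, habsω, one_mul]
      exact abs_g ha hp
    exact vecAngle_calc habsu habsω hre hlb hlc
  · rw [hta, htc]
    exact vecAngle_calc (abs_g ha hp) habsω2 hre2 hla hlc

end Tripod

open Real in
/-- Given a circle `C` (center `o`, radius `R`) and three (distinct) points
`a, b, c` on it, there exists a point `p` in the open disk bounded by `C` together with three
circular arcs (or segments) joining `p` to `a`, `b` and `c`, each meeting `C` perpendicularly
at its endpoint on `C`, such that the three arcs meet at `p` at pairwise `120°` angles. -/
theorem exists_perpendicular_tripod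
    (o : ℂ) (R : ℝ) (hR : 0 < R) (a b c : ℂ)
    (ha : dist a o = R) (hb : dist b o = R) (hc : dist c o = R)
    (hab : a ≠ b) (hbc : b ≠ c) (hac : a ≠ c) :
    ∃ p : ℂ, dist p o < R ∧
      ∃ Pa Pb Pc : Piece,
        Pa.Nondeg ∧ Pb.Nondeg ∧ Pc.Nondeg ∧
        Pa.source = p ∧ Pa.target = a ∧
        Pb.source = p ∧ Pb.target = b ∧
        Pc.source = p ∧ Pc.target = c ∧
        lineAngle (Pa.tangent 1) (Complex.I * (a - o)) = π / 2 ∧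
        lineAngle (Pb.tangent 1) (Complex.I * (b - o)) = π / 2 ∧
        lineAngle (Pc.tangent 1) (Complex.I * (c - o)) = π / 2 ∧
        vecAngle (Pa.tangent 0) (Pb.tangent 0) = 2 * π / 3 ∧
        vecAngle (Pb.tangent 0) (Pc.tangent 0) = 2 * π / 3 ∧
        vecAngle (Pa.tangent 0) (Pc.tangent 0) = 2 * π / 3 := by
  have hR0 : (R:ℂ) ≠ 0 := by exact_mod_cast hR.ne'
  set a' : ℂ := (a - o) / (R:ℂ) with ha'def
  set b' : ℂ := (b - o) / (R:ℂ) with hb'def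
  set c' : ℂ := (c - o) / (R:ℂ) with hc'def
  have habs : ∀ x : ℂ, dist x o = R → Complex.abs ((x - o)/(R:ℂ)) = 1 := by
    intro x hx
    rw [map_div₀, Complex.abs_ofReal, abs_of_pos hR, ← Complex.norm_eq_abs, ← Complex.dist_eq, hx, div_self hR.ne']
  have hinj : ∀ x y : ℂ, (x - o)/(R:ℂ) = (y - o)/(R:ℂ) → x = y := by
    intro x y h
    rw [div_eq_div_iff hR0 hR0] at h
    have h2 := mul_right_cancel₀ hR0 h
    exact sub_left_inj.mp h2
  obtain ⟨p', hp', Pa', Pb', Pc', nda, ndb, ndc, sa, ta, sb, tb, sc, tc,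
      qa, qb, qc, va, vb, vc⟩ :=
    Tripod.unit_case a' b' c' (habs a ha) (habs b hb) (habs c hc)
      (fun h => hab (hinj a b h)) (fun h => hbc (hinj b c h)) (fun h => hac (hinj a c h))
  classical
  let F : Piece → Piece := fun P =>
    match P with
    | .arc q r t0 t1 => .arc (o + (R:ℂ)*q) (R*r) t0 t1
    | .seg u v => .seg (o + (R:ℂ)*u) (o + (R:ℂ)*v)
  have hFtan : ∀ (P : Piece) (t : ℝ), (F P).tangent t = (R:ℂ) * P.tangent t := by
    intro P t
    cases P with
    | arc q r t0 t1 =>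
      show ((R*r : ℝ):ℂ) * _ * Complex.I * _ = (R:ℂ) * ((r:ℝ) * _ * Complex.I * _)
      push_cast
      ring
    | seg u v =>
      show (o + (R:ℂ)*v) - (o + (R:ℂ)*u) = (R:ℂ) * (v - u)
      ring
  have hFfun : ∀ (P : Piece) (t : ℝ), (F P).toFun t = o + (R:ℂ) * P.toFun t := by
    intro P t
    cases P with
    | arc q r t0 t1 =>
      show (o + (R:ℂ)*q) + ((R*r : ℝ):ℂ) * _ = o + (R:ℂ) * (q + (r:ℝ) * _)
      push_cast
      ring
    | seg u v =>
      show (o + (R:ℂ)*u) + (t:ℂ) * ((o + (R:ℂ)*v) - (o + (R:ℂ)*u))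
          = o + (R:ℂ) * (u + (t:ℂ) * (v - u))
      ring
  have hFnd : ∀ P : Piece, P.Nondeg → (F P).Nondeg := by
    intro P h
    cases P with
    | arc q r t0 t1 =>
      exact ⟨mul_ne_zero hR.ne' h.1, h.2⟩
    | seg u v =>
      intro h2
      exact h (mul_left_cancel₀ hR0 (by linear_combination h2))
  refine ⟨o + (R:ℂ)*p', ?_, F Pa', F Pb', F Pc', hFnd _ nda, hFnd _ ndb, hFnd _ ndc,
    ?_, ?_, ?_, ?_, ?_, ?_, ?_, ?_, ?_, ?_, ?_, ?_⟩
  · rw [Complex.dist_eq, Complex.norm_eq_abs]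
    rw [show o + (R:ℂ)*p' - o = (R:ℂ)*p' by ring, map_mul, Complex.abs_ofReal, abs_of_pos hR]
    calc R * Complex.abs p' < R * 1 := by
          exact (mul_lt_mul_iff_right₀ hR).mpr hp'
      _ = R := mul_one R
  · show (F Pa').toFun 0 = _
    rw [hFfun]
    show o + (R:ℂ) * Pa'.source = _
    rw [sa]
  · show (F Pa').toFun 1 = _
    rw [hFfun]
    show o + (R:ℂ) * Pa'.target = _
    rw [ta, ha'def]
    field_simp
    ring
  · show (F Pb').toFun 0 = _
    rw [hFfun]
    show o + (R:ℂ) * Pb'.source = _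
    rw [sb]
  · show (F Pb').toFun 1 = _
    rw [hFfun]
    show o + (R:ℂ) * Pb'.target = _
    rw [tb, hb'def]
    field_simp
    ring
  · show (F Pc').toFun 0 = _
    rw [hFfun]
    show o + (R:ℂ) * Pc'.source = _
    rw [sc]
  · show (F Pc').toFun 1 = _
    rw [hFfun]
    show o + (R:ℂ) * Pc'.target = _
    rw [tc, hc'def]
    field_simp
    ring
  · apply Tripod.lineAngle_perp
    rw [hFtan, show a - o = (R:ℂ)*a' by rw [ha'def]; field_simp, map_mul, Complex.conj_ofReal]
    rw [show (R:ℂ) * (starRingEnd ℂ) (Pa'.tangent 1) * (Complex.I * ((R:ℂ)*a'))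
        = ((R*R : ℝ):ℂ) * ((starRingEnd ℂ) (Pa'.tangent 1) * (Complex.I * a')) by push_cast; ring]
    rw [Complex.re_ofReal_mul, qa, mul_zero]
  · apply Tripod.lineAngle_perp
    rw [hFtan, show b - o = (R:ℂ)*b' by rw [hb'def]; field_simp, map_mul, Complex.conj_ofReal]
    rw [show (R:ℂ) * (starRingEnd ℂ) (Pb'.tangent 1) * (Complex.I * ((R:ℂ)*b'))
        = ((R*R : ℝ):ℂ) * ((starRingEnd ℂ) (Pb'.tangent 1) * (Complex.I * b')) by push_cast; ring]
    rw [Complex.re_ofReal_mul, qb, mul_zero]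
  · apply Tripod.lineAngle_perp
    rw [hFtan, show c - o = (R:ℂ)*c' by rw [hc'def]; field_simp, map_mul, Complex.conj_ofReal]
    rw [show (R:ℂ) * (starRingEnd ℂ) (Pc'.tangent 1) * (Complex.I * ((R:ℂ)*c'))
        = ((R*R : ℝ):ℂ) * ((starRingEnd ℂ) (Pc'.tangent 1) * (Complex.I * c')) by push_cast; ring]
    rw [Complex.re_ofReal_mul, qc, mul_zero]
  · rw [hFtan, hFtan, Tripod.vecAngle_smul hR]
    exact va
  · rw [hFtan, hFtan, Tripod.vecAngle_smul hR]
    exact vb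
  · rw [hFtan, hFtan, Tripod.vecAngle_smul hR]
    exact vc
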